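/- Let p ∈ (0, π), r > 0 and z ∈ ℝ satisfy (2p − sin 2p)/(8 sin²p) = |z| / r². Then √((√(r⁴ + 48z²) + r²)/2) ≤ (p / sin p) · r ≤ √((√(r⁴ + 64π²z²) + r²)/2). -/

import Mathlib

open Real

lemma nonneg_aux (f f' : ℝ → ℝ) (hd : ∀ x, HasDerivAt f (f' x) x)
    (h0 : f 0 = 0) (hf' : ∀ x, 0 ≤ x → 0 ≤ f' x) {x : ℝ} (hx : 0 ≤ x) :
    0 ≤ f x := by
  have hmono : MonotoneOn f (Set.Ici 0) := by
    apply monotoneOn_of_deriv_nonneg (convex_Ici 0)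
    · exact fun y _ => (hd y).continuousAt.continuousWithinAt
    · exact fun y _ => (hd y).differentiableAt.differentiableWithinAt
    · intro y hy
      rw [(hd y).deriv]
      rw [interior_Ici] at hy
      exact hf' y (le_of_lt hy)
  have := hmono (Set.self_mem_Ici) hx hx
  rwa [h0] at this

lemma sin_ge_taylor3 {x : ℝ} (hx : 0 ≤ x) : x - x ^ 3 / 6 ≤ sin x := by
  have := nonneg_aux (fun x => sin x - (x - x ^ 3 / 6))
      (fun x => cos x - (1 - x ^ 2 / 2)) (fun y => by
        have h1 := (Real.hasDerivAt_sin y).sub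
          ((hasDerivAt_id y).sub ((hasDerivAt_pow 3 y).div_const 6))
        exact h1.congr_deriv (by norm_num; ring))
      (by simp) (fun y _ => sub_nonneg.2 Real.one_sub_sq_div_two_le_cos) hx
  linarith [this]

lemma cos_le_taylor4 {x : ℝ} (hx : 0 ≤ x) : cos x ≤ 1 - x ^ 2 / 2 + x ^ 4 / 24 := by
  have := nonneg_aux (fun x => 1 - x ^ 2 / 2 + x ^ 4 / 24 - cos x)
      (fun x => sin x - (x - x ^ 3 / 6)) (fun y => by
        have h1 := ((((hasDerivAt_const y (1:ℝ)).sub ((hasDerivAt_pow 2 y).div_const 2)).add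
          ((hasDerivAt_pow 4 y).div_const 24)).sub (Real.hasDerivAt_cos y))
        exact h1.congr_deriv (by norm_num; ring))
      (by simp) (fun y hy => sub_nonneg.2 (sin_ge_taylor3 hy)) hx
  linarith [this]

lemma sin_le_taylor5 {x : ℝ} (hx : 0 ≤ x) : sin x ≤ x - x ^ 3 / 6 + x ^ 5 / 120 := by
  have := nonneg_aux (fun x => x - x ^ 3 / 6 + x ^ 5 / 120 - sin x)
      (fun x => 1 - x ^ 2 / 2 + x ^ 4 / 24 - cos x) (fun y => by
        have h1 := ((((hasDerivAt_id y).sub ((hasDerivAt_pow 3 y).div_const 6)).add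
          ((hasDerivAt_pow 5 y).div_const 120)).sub (Real.hasDerivAt_sin y))
        exact h1.congr_deriv (by norm_num; ring))
      (by simp) (fun y hy => sub_nonneg.2 (cos_le_taylor4 hy)) hx
  linarith [this]

lemma cos_ge_taylor6 {x : ℝ} (hx : 0 ≤ x) :
    1 - x ^ 2 / 2 + x ^ 4 / 24 - x ^ 6 / 720 ≤ cos x := by
  have := nonneg_aux (fun x => cos x - (1 - x ^ 2 / 2 + x ^ 4 / 24 - x ^ 6 / 720))
      (fun x => x - x ^ 3 / 6 + x ^ 5 / 120 - sin x) (fun y => by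
        have h1 := (Real.hasDerivAt_cos y).sub
          ((((hasDerivAt_const y (1:ℝ)).sub ((hasDerivAt_pow 2 y).div_const 2)).add
            ((hasDerivAt_pow 4 y).div_const 24)).sub ((hasDerivAt_pow 6 y).div_const 720))
        exact h1.congr_deriv (by norm_num; ring))
      (by simp) (fun y hy => sub_nonneg.2 (sin_le_taylor5 hy)) hx
  linarith [this]

lemma sin_ge_taylor7 {x : ℝ} (hx : 0 ≤ x) :
    x - x ^ 3 / 6 + x ^ 5 / 120 - x ^ 7 / 5040 ≤ sin x := by
  have := nonneg_aux (fun x => sin x - (x - x ^ 3 / 6 + x ^ 5 / 120 - x ^ 7 / 5040))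
      (fun x => cos x - (1 - x ^ 2 / 2 + x ^ 4 / 24 - x ^ 6 / 720)) (fun y => by
        have h1 := (Real.hasDerivAt_sin y).sub
          (((((hasDerivAt_id y).sub ((hasDerivAt_pow 3 y).div_const 6)).add
            ((hasDerivAt_pow 5 y).div_const 120)).sub ((hasDerivAt_pow 7 y).div_const 5040)))
        exact h1.congr_deriv (by norm_num; ring))
      (by simp) (fun y hy => sub_nonneg.2 (cos_ge_taylor6 hy)) hx
  linarith [this]


lemma lemA {p : ℝ} (hp0 : 0 < p) (hpπ : p ≤ π) :
    3 * (p - sin p * cos p) ^ 2 ≤ 4 * p ^ 2 * (p ^ 2 - sin p ^ 2) := by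
  have hsc : sin p * cos p = sin (2 * p) / 2 := by rw [Real.sin_two_mul]; ring
  have hge0 : 0 ≤ p - sin p * cos p := by
    rw [hsc]
    have := Real.sin_le (by linarith : (0:ℝ) ≤ 2 * p)
    linarith
  rcases le_or_gt p (5/2) with hc | hc
  · -- small case
    have hub : p - sin p * cos p ≤ 2/3 * p^3 - 2/15 * p^5 + 4/315 * p^7 := by
      rw [hsc]
      have := sin_ge_taylor7 (by linarith : (0:ℝ) ≤ 2 * p)
      nlinarith [this]
    have hsu : sin p ≤ p - p^3/6 + p^5/120 := sin_le_taylor5 hp0.le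
    have hs0 : 0 ≤ sin p := Real.sin_nonneg_of_nonneg_of_le_pi hp0.le hpπ
    have hs2 : sin p ^ 2 ≤ (p - p^3/6 + p^5/120) ^ 2 := pow_le_pow_left₀ hs0 hsu 2
    have hl2 : (p - sin p * cos p) ^ 2 ≤ (2/3 * p^3 - 2/15 * p^5 + 4/315 * p^7) ^ 2 :=
      pow_le_pow_left₀ hge0 hub 2
    have key : 0 ≤ 16/45 - 293/3150*(p^2) + 83/8400*(p^2)^2 - 16/33075*(p^2)^3 := by
      have hq1 : p^2 ≤ 25/4 := by nlinarith
      have hq0 : (0:ℝ) ≤ p^2 := sq_nonneg p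
      nlinarith [sq_nonneg (25/4 - p^2), mul_nonneg (mul_nonneg
        (by linarith : (0:ℝ) ≤ 25/4 - p^2) (by linarith : (0:ℝ) ≤ 25/4 - p^2))
        (by linarith : (0:ℝ) ≤ 25/4 - p^2)]
    have hp8 : (0:ℝ) ≤ p ^ 8 := by positivity
    have hmid : 3 * (2/3 * p^3 - 2/15 * p^5 + 4/315 * p^7) ^ 2 ≤
        4 * p ^ 2 * (p ^ 2 - (p - p^3/6 + p^5/120) ^ 2) := by
      nlinarith [mul_nonneg hp8 key]
    have hlast : 4 * p ^ 2 * (p ^ 2 - (p - p^3/6 + p^5/120) ^ 2) ≤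
        4 * p ^ 2 * (p ^ 2 - sin p ^ 2) := by
      have h4 : (0:ℝ) ≤ 4 * p ^ 2 := by positivity
      have := mul_le_mul_of_nonneg_left (sub_le_sub_left hs2 (p^2)) h4
      linarith
    linarith
  · -- large case
    have hs1 : sin (2*p) ≤ 1 := Real.sin_le_one _
    have hs1' : -1 ≤ sin (2*p) := Real.neg_one_le_sin _
    have hsq : sin p ^ 2 ≤ 1 := Real.sin_sq_le_one p
    have h1 : 3 * (p - sin p * cos p)^2 ≤ 3 * (p + 1/2)^2 := by
      rw [hsc]; nlinarith
    have h2 : 3 * (p + 1/2)^2 ≤ 4 * p^2 * (p^2 - 1) := by nlinarith [sq_nonneg (p - 5/2)]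
    have h3 : 4 * p^2 * (p^2 - 1) ≤ 4 * p ^ 2 * (p ^ 2 - sin p ^ 2) := by
      have h4 : (0:ℝ) ≤ 4 * p ^ 2 := by positivity
      have := mul_le_mul_of_nonneg_left (sub_le_sub_left hsq (p^2)) h4
      linarith
    linarith


set_option maxHeartbeats 1000000 in
lemma lemB {p : ℝ} (hp0 : 0 < p) (hpπ : p ≤ π) :
    p ^ 2 * (p ^ 2 - sin p ^ 2) ≤ π ^ 2 * (p - sin p * cos p) ^ 2 := by
  have hsc : sin p * cos p = sin (2 * p) / 2 := by rw [Real.sin_two_mul]; ring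
  have hπ : 3.1415 < π := Real.pi_gt_d4
  have hπu : π < 3.1416 := Real.pi_lt_d4
  rcases le_or_gt p (π/2) with hc | hc
  · have hq : p^2 ≤ 5/2 := by nlinarith
    have hlb : 2/3 * p^3 - 2/15 * p^5 ≤ p - sin p * cos p := by
      rw [hsc]
      have := sin_le_taylor5 (by linarith : (0:ℝ) ≤ 2 * p)
      nlinarith [this]
    have hlb0 : 0 ≤ 2/3 * p^3 - 2/15 * p^5 := by
      have h3 : (0:ℝ) ≤ p^3 := by positivity
      nlinarith
    have hsq2 : (2/3 * p^3 - 2/15 * p^5)^2 ≤ (p - sin p * cos p)^2 :=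
      pow_le_pow_left₀ hlb0 hlb 2
    have hs3 : p - p^3/6 ≤ sin p := sin_ge_taylor3 hp0.le
    have hs30 : 0 ≤ p - p^3/6 := by nlinarith
    have hs2 : (p - p^3/6)^2 ≤ sin p ^ 2 := pow_le_pow_left₀ hs30 hs3 2
    -- step1 : p^2 - sin p ^2 ≤ p^4/3 - p^6/36
    have step1 : p^2*(p^2 - sin p ^ 2) ≤ p^2*(p^4/3 - p^6/36) := by
      have h4 : (0:ℝ) ≤ p^2 := sq_nonneg p
      have h5 : p^2 - sin p ^ 2 ≤ p^4/3 - p^6/36 := by nlinarith [hs2]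
      exact mul_le_mul_of_nonneg_left h5 h4
    -- step3 : p^2*(p^4/3 - p^6/36) ≤ π²*(2/3p³-2/15p⁵)²
    have ha : (1:ℝ)/3 ≤ 2/3 - 2/15*p^2 := by linarith
    have ha2 : (1:ℝ)/9 ≤ (2/3 - 2/15*p^2)^2 := by nlinarith
    have hπ2 : (9.86:ℝ) ≤ π^2 := by nlinarith [hπ]
    have hcore : (9.86:ℝ) * (1/9) ≤ π^2 * (2/3 - 2/15*p^2)^2 :=
      mul_le_mul hπ2 ha2 (by norm_num) (sq_nonneg π)
    have step3 : p^2*(p^4/3 - p^6/36) ≤ π^2 * (2/3 * p^3 - 2/15 * p^5)^2 := by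
      have key : 1/3 - p^2/36 ≤ π^2 * (2/3 - 2/15*p^2)^2 := by
        have h0 : (0:ℝ) ≤ p^2 := sq_nonneg p
        linarith [hcore]
      have hp6 : (0:ℝ) ≤ p^6 := by positivity
      have e1 : p^2*(p^4/3 - p^6/36) = p^6 * (1/3 - p^2/36) := by ring
      have e2 : π^2 * (2/3 * p^3 - 2/15 * p^5)^2 = p^6 * (π^2*(2/3 - 2/15*p^2)^2) := by ring
      rw [e1, e2]
      exact mul_le_mul_of_nonneg_left key hp6
    have step4 : π^2 * (2/3 * p^3 - 2/15 * p^5)^2 ≤ π^2 * (p - sin p * cos p)^2 :=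
      mul_le_mul_of_nonneg_left hsq2 (sq_nonneg π)
    linarith
  · have h2p : sin (2*p) ≤ 0 := by
      have h1 : sin (2*p - π) = - sin (2*p) := Real.sin_sub_pi _
      have h2 : 0 ≤ sin (2*p - π) :=
        Real.sin_nonneg_of_nonneg_of_le_pi (by linarith) (by linarith)
      linarith
    have hge : p ≤ p - sin p * cos p := by rw [hsc]; linarith
    have h1 : p^2*(p^2 - sin p^2) ≤ p^2*p^2 := by
      have := mul_le_mul_of_nonneg_left
        (sub_le_sub_left (sq_nonneg (sin p)) (p^2)) (sq_nonneg p)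
      nlinarith [this]
    have h2 : p^2*p^2 ≤ π^2*p^2 := by
      have hpp : p^2 ≤ π^2 := pow_le_pow_left₀ hp0.le hpπ 2
      exact mul_le_mul_of_nonneg_right hpp (sq_nonneg p)
    have h3 : π^2*p^2 ≤ π^2*(p - sin p * cos p)^2 :=
      mul_le_mul_of_nonneg_left (pow_le_pow_left₀ hp0.le hge 2) (sq_nonneg π)
    linarith


set_option maxHeartbeats 1000000 in
theorem stmt13 (p r z : ℝ) (hp : p ∈ Set.Ioo 0 Real.pi) (hr : 0 < r)
    (hrel : (2 * p - Real.sin (2 * p)) / (8 * Real.sin p ^ 2) = |z| / r ^ 2) :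
    Real.sqrt ((Real.sqrt (r ^ 4 + 48 * z ^ 2) + r ^ 2) / 2) ≤ p / Real.sin p * r ∧
    p / Real.sin p * r ≤
      Real.sqrt ((Real.sqrt (r ^ 4 + 64 * Real.pi ^ 2 * z ^ 2) + r ^ 2) / 2) := by
  obtain ⟨hp0, hpπ'⟩ := hp
  have hpπ : p ≤ π := hpπ'.le
  have hs : 0 < sin p := Real.sin_pos_of_pos_of_lt_pi hp0 hpπ'
  set X := p / sin p * r with hX
  have hXpos : 0 < X := by
    have : 0 < p / sin p := div_pos hp0 hs
    positivity
  have hrX : r ≤ X := by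
    have h1 : sin p ≤ p := Real.sin_le hp0.le
    have h2 : 1 ≤ p / sin p := (one_le_div hs).2 h1
    calc r = 1 * r := (one_mul r).symm
    _ ≤ p / sin p * r := by
      exact mul_le_mul_of_nonneg_right h2 hr.le
  have h2d : 0 ≤ 2 * X ^ 2 - r ^ 2 := by nlinarith [hrX, hr]
  -- relation
  rw [div_eq_div_iff (by positivity) (by positivity)] at hrel
  have hz2 : 64 * sin p ^ 4 * z ^ 2 = (2 * p - sin (2 * p)) ^ 2 * r ^ 4 := by
    have h2 : ((2 * p - sin (2 * p)) * r ^ 2) ^ 2 = (|z| * (8 * sin p ^ 2)) ^ 2 := by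
      rw [hrel]
    linear_combination -h2 - 64 * sin p ^ 4 * sq_abs z
  have hsin2 : 2 * p - sin (2 * p) = 2 * (p - sin p * cos p) := by
    rw [Real.sin_two_mul]; ring
  have hs4 : (0 : ℝ) < sin p ^ 4 := by positivity
  have hz2' : 64 * sin p ^ 4 * z ^ 2 = 4 * (p - sin p * cos p) ^ 2 * r ^ 4 := by
    rw [hz2, hsin2]; ring
  have hr4 : (0 : ℝ) ≤ r ^ 4 := by positivity
  -- key lower inequality
  have hA := lemA hp0 hpπ
  have hAr := mul_le_mul_of_nonneg_right hA hr4
  have keyLow : 48 * z ^ 2 ≤ 4 * X ^ 4 - 4 * X ^ 2 * r ^ 2 := by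
    have hEq : 4 * X ^ 4 - 4 * X ^ 2 * r ^ 2 =
        (4 * p ^ 4 * r ^ 4 - 4 * p ^ 2 * r ^ 4 * sin p ^ 2) / sin p ^ 4 := by
      rw [hX]; field_simp
    rw [hEq, le_div_iff₀ hs4]
    nlinarith [hAr, hz2']
  -- key upper inequality
  have hB := lemB hp0 hpπ
  have hBr := mul_le_mul_of_nonneg_right hB hr4
  have keyUp : 4 * X ^ 4 - 4 * X ^ 2 * r ^ 2 ≤ 64 * π ^ 2 * z ^ 2 := by
    have hEq : 4 * X ^ 4 - 4 * X ^ 2 * r ^ 2 =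
        (4 * p ^ 4 * r ^ 4 - 4 * p ^ 2 * r ^ 4 * sin p ^ 2) / sin p ^ 4 := by
      rw [hX]; field_simp
    rw [hEq, div_le_iff₀ hs4]
    have hzπ : π ^ 2 * (64 * sin p ^ 4 * z ^ 2) =
        π ^ 2 * (4 * (p - sin p * cos p) ^ 2 * r ^ 4) := by rw [hz2']
    nlinarith [hBr, hzπ]
  constructor
  · -- lower bound
    have s1 : Real.sqrt (r ^ 4 + 48 * z ^ 2) ≤ 2 * X ^ 2 - r ^ 2 := by
      have h := Real.sqrt_le_sqrt (show r ^ 4 + 48 * z ^ 2 ≤ (2 * X ^ 2 - r ^ 2) ^ 2 by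
        nlinarith [keyLow])
      rwa [Real.sqrt_sq h2d] at h
    have h2 : (Real.sqrt (r ^ 4 + 48 * z ^ 2) + r ^ 2) / 2 ≤ X ^ 2 := by linarith
    have h3 := Real.sqrt_le_sqrt h2
    rwa [Real.sqrt_sq hXpos.le] at h3
  · -- upper bound
    have s2 : 2 * X ^ 2 - r ^ 2 ≤ Real.sqrt (r ^ 4 + 64 * π ^ 2 * z ^ 2) := by
      rw [Real.le_sqrt h2d (by positivity)]
      nlinarith [keyUp]
    rw [Real.le_sqrt hXpos.le (by positivity)]
    have h0 : 0 ≤ Real.sqrt (r ^ 4 + 64 * π ^ 2 * z ^ 2) := Real.sqrt_nonneg _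
    linarith
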